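/- Let M be a matroid on E with bases ℬ and let A be a stressed subset of M (i.e., M|A and M/A are both uniform). Then ℬ ∪ cusp(A) is the collection of bases of a matroid on E, where cusp(A) = { S ∈ binom(E, rk(M)) : |S ∩ A| ≥ rk(A)+1 }. -/

import Mathlib

open Set

variable {α : Type*}

/-- The (natural-number valued) rank of a set `X` in a matroid `M`:
the maximum cardinality of an independent subset of `X`. -/
noncomputable def Matroid.nrk (M : Matroid α) (X : Set α) : ℕ :=
  sSup (Set.ncard '' {I | M.Indep I ∧ I ⊆ X})

/-- The rank of the matroid `M`. -/
noncomputable def Matroid.nRank (M : Matroid α) : ℕ := M.nrk M.E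

/-- The cusp of a subset `A` in a matroid `M` of rank `k`:
all `k`-element subsets `S` of the ground set with `|S ∩ A| ≥ rk A + 1`. -/
def Matroid.cusp (M : Matroid α) (A : Set α) : Set (Set α) :=
  {S | S ⊆ M.E ∧ S.ncard = M.nRank ∧ M.nrk A + 1 ≤ (S ∩ A).ncard}

/-- A subset `A` of a matroid `M` is stressed if both the restriction `M | A`
and the contraction `M / A` are uniform matroids; for a finite matroid this is
equivalent to the rank functions of the restriction and of the contraction being
those of uniform matroids. -/
def Matroid.StressedSubset (M : Matroid α) (A : Set α) : Prop :=
  (∀ S ⊆ A, M.nrk S = min S.ncard (M.nrk A)) ∧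
  (∀ Y ⊆ M.E \ A, M.nrk (A ∪ Y) = M.nrk A + min Y.ncard (M.nRank - M.nrk A))

namespace Matroid

variable {M : Matroid α} {I X Y B : Set α}

lemma nrk_bddAbove (hfin : M.E.Finite) (X : Set α) :
    BddAbove (Set.ncard '' {I | M.Indep I ∧ I ⊆ X}) := by
  refine ⟨M.E.ncard, ?_⟩
  rintro n ⟨I, ⟨hI, -⟩, rfl⟩
  exact Set.ncard_le_ncard hI.subset_ground hfin

lemma IsBasis.nrk_eq (hfin : M.E.Finite) (hI : M.IsBasis I X) :
    M.nrk X = I.ncard := by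
  refine le_antisymm (csSup_le ⟨0, ∅, ⟨M.empty_indep, empty_subset _⟩, by simp⟩ ?_)
    (le_csSup (nrk_bddAbove hfin X) ⟨I, ⟨hI.indep, hI.subset⟩, rfl⟩)
  rintro n ⟨J, ⟨hJ, hJX⟩, rfl⟩
  obtain ⟨K, hK, hJK⟩ := hJ.subset_isBasis_of_subset hJX hI.subset_ground
  have hKI : K.ncard = I.ncard := by
    rw [Set.ncard_def, Set.ncard_def, hK.encard_eq_encard hI]
  rw [← hKI]
  exact Set.ncard_le_ncard hJK (hfin.subset hK.indep.subset_ground)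

lemma Indep.nrk_eq (hfin : M.E.Finite) (hI : M.Indep I) : M.nrk I = I.ncard :=
  hI.isBasis_self.nrk_eq hfin

lemma indep_of_nrk_eq_ncard (hfin : M.E.Finite) (hX : X ⊆ M.E)
    (h : M.nrk X = X.ncard) : M.Indep X := by
  obtain ⟨I, hI⟩ := M.exists_isBasis X hX
  have h1 := hI.nrk_eq hfin
  have : I = X :=
    Set.eq_of_subset_of_ncard_le hI.subset (by rw [← h1, h]) (hfin.subset hX)
  rw [← this]
  exact hI.indep

lemma nrk_mono (hfin : M.E.Finite) (hXY : X ⊆ Y) : M.nrk X ≤ M.nrk Y := by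
  refine csSup_le ⟨0, ∅, ⟨M.empty_indep, empty_subset _⟩, by simp⟩ ?_
  rintro n ⟨J, ⟨hJ, hJX⟩, rfl⟩
  exact le_csSup (nrk_bddAbove hfin Y) ⟨J, ⟨hJ, hJX.trans hXY⟩, rfl⟩

lemma IsBase.ncard_eq (hfin : M.E.Finite) (hB : M.IsBase B) : B.ncard = M.nRank :=
  (hB.isBasis_ground.nrk_eq hfin).symm

lemma base_of_indep_of_ncard (hfin : M.E.Finite) (hI : M.Indep I)
    (h : I.ncard = M.nRank) : M.IsBase I := by
  obtain ⟨B, hB, hIB⟩ := hI.exists_isBase_superset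
  have hBn := hB.ncard_eq hfin
  have : I = B := Set.eq_of_subset_of_ncard_le hIB (by rw [hBn, ← h])
    (hfin.subset hB.subset_ground)
  rwa [this]

/-- An independent subset of `S` of cardinality at most `nrk A` after intersecting with a
stressed set `A`, and small outside of `A`, is independent. -/
lemma indep_of_stressed (hfin : M.E.Finite) {A : Set α} (hA : A ⊆ M.E)
    (hstr : M.StressedSubset A) (hIE : I ⊆ M.E)
    (h1 : (I ∩ A).ncard ≤ M.nrk A) (h2 : (I \ A).ncard ≤ M.nRank - M.nrk A) :
    M.Indep I := by
  have hIfin : I.Finite := hfin.subset hIE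
  have hIA : M.Indep (I ∩ A) := by
    apply indep_of_nrk_eq_ncard hfin ((inter_subset_left).trans hIE)
    rw [hstr.1 _ inter_subset_right, min_eq_left h1]
  have hYE : I \ A ⊆ M.E \ A := diff_subset_diff_left hIE
  have h2' : M.nrk (A ∪ (I \ A)) = M.nrk A + (I \ A).ncard := by
    rw [hstr.2 _ hYE, min_eq_left h2]
  obtain ⟨K, hK, hIAK⟩ := hIA.subset_isBasis_of_subset
    ((inter_subset_right).trans subset_union_left)
    (union_subset hA (hYE.trans diff_subset))
  have hKcard : K.ncard = M.nrk A + (I \ A).ncard := by rw [← hK.nrk_eq hfin, h2']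
  have hKfin : K.Finite := hfin.subset hK.indep.subset_ground
  have hKA : (K ∩ A).ncard ≤ M.nrk A := by
    have hi : M.Indep (K ∩ A) := hK.indep.subset inter_subset_left
    calc (K ∩ A).ncard = min (K ∩ A).ncard (M.nrk A) := by
          rw [← hstr.1 _ inter_subset_right, hi.nrk_eq hfin]
      _ ≤ M.nrk A := min_le_right _ _
  have hKdiff : K \ A ⊆ I \ A := by
    intro e he
    rcases hK.subset he.1 with h | h
    · exact absurd h he.2
    · exact h
  have hYfin : (I \ A).Finite := hIfin.subset diff_subset
  have hsum : (K ∩ A).ncard + (K \ A).ncard = K.ncard :=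
    Set.ncard_inter_add_ncard_diff_eq_ncard K A hKfin
  have hKd_le : (K \ A).ncard ≤ (I \ A).ncard := Set.ncard_le_ncard hKdiff hYfin
  have hYK : I \ A ⊆ K := by
    have hle : (I \ A).ncard ≤ (K \ A).ncard := by omega
    rw [← Set.eq_of_subset_of_ncard_le hKdiff hle hYfin]
    exact diff_subset
  exact hK.indep.subset (by
    rw [← Set.inter_union_diff I A]
    exact union_subset hIAK hYK)

end Matroid

/-- relaxation of a stressed subset: if `A` is a stressed subset of `M`,
then the bases of `M` together with the members of the cusp of `A` form the collection of
bases of a matroid on the same ground set. -/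
theorem exists_relaxation (M : Matroid α) (hfin : M.E.Finite) {A : Set α}
    (hA : A ⊆ M.E) (hstr : M.StressedSubset A) :
    ∃ M' : Matroid α, M'.E = M.E ∧ ∀ B, (M'.IsBase B ↔ M.IsBase B ∨ B ∈ M.cusp A) := by
  classical
  set Bs : Set α → Prop := fun B => M.IsBase B ∨ B ∈ M.cusp A with hBsdef
  have hground : ∀ B, Bs B → B ⊆ M.E := by
    rintro B (h | h)
    · exact h.subset_ground
    · exact h.1
  have hcard : ∀ B, Bs B → B.ncard = M.nRank := by
    rintro B (h | h)
    · exact h.ncard_eq hfin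
    · exact h.2.1
  have hrk : M.nrk A ≤ M.nRank := Matroid.nrk_mono hfin hA
  -- a set of full size meeting `A` in exactly `nrk A` elements is a base
  have key : ∀ S : Set α, S ⊆ M.E → S.ncard = M.nRank → (S ∩ A).ncard = M.nrk A →
      M.IsBase S := by
    intro S hSE hSk hSA
    have hsum : (S ∩ A).ncard + (S \ A).ncard = S.ncard :=
      Set.ncard_inter_add_ncard_diff_eq_ncard S A (hfin.subset hSE)
    exact Matroid.base_of_indep_of_ncard hfin
      (Matroid.indep_of_stressed hfin hA hstr hSE (le_of_eq hSA) (by omega)) hSk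
  have hexch : Matroid.ExchangeProperty Bs := by
    rintro B₁ B₂ h₁ h₂ x hx
    have hE1 : B₁ ⊆ M.E := hground _ h₁
    have hE2 : B₂ ⊆ M.E := hground _ h₂
    have hc₁ : B₁.ncard = M.nRank := hcard _ h₁
    have hc₂ : B₂.ncard = M.nRank := hcard _ h₂
    have hB1fin : B₁.Finite := hfin.subset hE1
    have hB2fin : B₂.Finite := hfin.subset hE2
    have hiAfin : (B₁ ∩ A).Finite := hB1fin.subset inter_subset_left
    have hne : (B₂ \ B₁).Nonempty := by
      rw [nonempty_iff_ne_empty]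
      intro h0
      have hsub : B₂ ⊆ B₁ := diff_eq_empty.mp h0
      have heq : B₂ = B₁ := Set.eq_of_subset_of_ncard_le hsub (by omega) hB1fin
      exact hx.2 (by rw [heq]; exact hx.1)
    have hB'card : ∀ y ∉ B₁, (insert y (B₁ \ {x})).ncard = M.nRank := by
      intro y hy
      rw [Set.ncard_exchange hy hx.1, hc₁]
    have hB'sub : ∀ y ∈ M.E, insert y (B₁ \ {x}) ⊆ M.E := fun y hy =>
      insert_subset hy (diff_subset.trans hE1)
    have hdi : (B₁ \ {x}) ∩ A = (B₁ ∩ A) \ {x} := by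
      ext e; simp only [mem_inter_iff, mem_diff, mem_singleton_iff]; tauto
    have hins_mem : ∀ y ∈ A, (insert y (B₁ \ {x})) ∩ A = insert y ((B₁ ∩ A) \ {x}) := by
      intro y hy
      rw [Set.insert_inter_of_mem hy, hdi]
    have hins_not : ∀ y ∉ A, (insert y (B₁ \ {x})) ∩ A = (B₁ ∩ A) \ {x} := by
      intro y hy
      rw [Set.insert_inter_of_notMem hy, hdi]
    have hsum1 : (B₁ ∩ A).ncard + (B₁ \ A).ncard = B₁.ncard :=
      Set.ncard_inter_add_ncard_diff_eq_ncard B₁ A hB1fin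
    rcases h₁ with h₁ | h₁
    · -- B₁ is a base of M
      rcases h₂ with h₂ | h₂
      · -- both bases : use matroid exchange
        obtain ⟨y, hy, hB'⟩ := h₁.exchange h₂ hx
        exact ⟨y, hy, Or.inl hB'⟩
      · -- B₁ base, B₂ in cusp
        have ha : (B₁ ∩ A).ncard ≤ M.nrk A := by
          have hi : M.Indep (B₁ ∩ A) := h₁.indep.subset inter_subset_left
          calc (B₁ ∩ A).ncard = min (B₁ ∩ A).ncard (M.nrk A) := by
                rw [← hstr.1 _ inter_subset_right, hi.nrk_eq hfin]
            _ ≤ M.nrk A := min_le_right _ _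
        have h2A : M.nrk A + 1 ≤ (B₂ ∩ A).ncard := h₂.2.2
        by_cases haeq : (B₁ ∩ A).ncard = M.nrk A
        · -- pick y in (B₂ ∩ A) \ B₁
          have hyex : ((B₂ ∩ A) \ B₁).Nonempty := by
            rw [nonempty_iff_ne_empty]
            intro h0
            have hsub : B₂ ∩ A ⊆ B₁ ∩ A := fun e he =>
              ⟨diff_eq_empty.mp h0 he, he.2⟩
            have := Set.ncard_le_ncard hsub hiAfin
            omega
          obtain ⟨y, hyBA, hyB1⟩ := hyex
          refine ⟨y, ⟨hyBA.1, hyB1⟩, ?_⟩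
          by_cases hxA : x ∈ A
          · -- base target, |B' ∩ A| = nrk A
            left
            apply key _ (hB'sub y (hE2 hyBA.1)) (hB'card y hyB1)
            rw [hins_mem y hyBA.2,
              Set.ncard_insert_of_notMem (fun h => hyB1 h.1.1)
                hiAfin.diff,
              Set.ncard_diff_singleton_of_mem (Set.mem_inter hx.1 hxA)]
            have hpos : 0 < (B₁ ∩ A).ncard := (Set.ncard_pos hiAfin).mpr ⟨x, hx.1, hxA⟩
            omega
          · -- cusp target
            right
            refine ⟨hB'sub y (hE2 hyBA.1), hB'card y hyB1, ?_⟩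
            rw [hins_mem y hyBA.2, Set.diff_singleton_eq_self (fun h => hxA h.2),
              Set.ncard_insert_of_notMem (fun h => hyB1 h.1) hiAfin]
            omega
        · -- |B₁ ∩ A| < nrk A : augmentation
          have ha' : (B₁ ∩ A).ncard < M.nrk A := lt_of_le_of_ne ha haeq
          obtain ⟨Ia, hIa_sub, hIa_card⟩ :=
            Set.exists_subset_card_eq (show M.nrk A ≤ (B₂ ∩ A).ncard by omega)
          have hbd : M.nRank - M.nrk A ≤ ((B₁ \ A) \ {x}).ncard := by
            have hmono : (B₁ \ A).ncard ≤ ((B₁ \ A) \ {x}).ncard + 1 := by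
              calc (B₁ \ A).ncard ≤ (insert x ((B₁ \ A) \ {x})).ncard :=
                    Set.ncard_le_ncard (fun e he => by
                      by_cases hex : e = x
                      · exact Or.inl hex
                      · exact Or.inr ⟨he, hex⟩)
                      ((hB1fin.subset diff_subset).diff.insert x)
                _ ≤ ((B₁ \ A) \ {x}).ncard + 1 := Set.ncard_insert_le _ _
            omega
          obtain ⟨Ib, hIb_sub, hIb_card⟩ := Set.exists_subset_card_eq hbd
          have hIaA : Ia ⊆ A := hIa_sub.trans inter_subset_right
          have hIbnA : ∀ e ∈ Ib, e ∉ A := fun e he => (hIb_sub he).1.2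
          have hIafin : Ia.Finite := hB2fin.subset (hIa_sub.trans inter_subset_left)
          have hIbfin : Ib.Finite := (hB1fin.subset diff_subset).subset
            (hIb_sub.trans diff_subset)
          have hIA : (Ia ∪ Ib) ∩ A = Ia := by
            ext e
            simp only [mem_inter_iff, mem_union]
            constructor
            · rintro ⟨h | h, hA'⟩
              · exact h
              · exact absurd hA' (hIbnA e h)
            · exact fun h => ⟨Or.inl h, hIaA h⟩
          have hIdA : (Ia ∪ Ib) \ A = Ib := by
            ext e
            simp only [mem_diff, mem_union]
            constructor
            · rintro ⟨h | h, hA'⟩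
              · exact absurd (hIaA h) hA'
              · exact h
            · exact fun h => ⟨Or.inr h, hIbnA e h⟩
          have hIE : Ia ∪ Ib ⊆ M.E :=
            union_subset ((hIa_sub.trans inter_subset_left).trans hE2)
              ((hIb_sub.trans (diff_subset.trans diff_subset)).trans hE1)
          have hIindep : M.Indep (Ia ∪ Ib) :=
            Matroid.indep_of_stressed hfin hA hstr hIE
              (by rw [hIA, hIa_card]) (by rw [hIdA, hIb_card])
          have hIcard : (Ia ∪ Ib).ncard = M.nRank := by
            have hdisj : Disjoint Ia Ib :=
              disjoint_left.mpr fun e hea heb => hIbnA e heb (hIaA hea)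
            rw [Set.ncard_union_eq hdisj hIafin hIbfin, hIa_card, hIb_card]
            omega
          have hIbase : M.IsBase (Ia ∪ Ib) :=
            Matroid.base_of_indep_of_ncard hfin hIindep hIcard
          have hB1x_indep : M.Indep (B₁ \ {x}) := h₁.indep.subset diff_subset
          have hB1x_not : ¬ M.IsBase (B₁ \ {x}) := by
            intro hb
            have h1 := hb.ncard_eq hfin
            have h2 : (B₁ \ {x}).ncard = B₁.ncard - 1 :=
              Set.ncard_diff_singleton_of_mem hx.1
            have hpos : 0 < B₁.ncard := (Set.ncard_pos hB1fin).mpr ⟨x, hx.1⟩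
            omega
          obtain ⟨y, hyI, hyind⟩ :=
            hB1x_indep.exists_insert_of_not_isBase hB1x_not hIbase
          have hyB2 : y ∈ B₂ := by
            rcases hyI.1 with h | h
            · exact (hIa_sub h).1
            · exact absurd ⟨(hIb_sub h).1.1, (hIb_sub h).2⟩ hyI.2
          have hyB1 : y ∉ B₁ := by
            intro hyb
            have hyx : y ≠ x := fun h => hx.2 (h ▸ hyB2)
            exact hyI.2 ⟨hyb, hyx⟩
          exact ⟨y, ⟨hyB2, hyB1⟩,
            Or.inl (Matroid.base_of_indep_of_ncard hfin hyind (hB'card y hyB1))⟩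
    · -- B₁ in cusp
      have h1A : M.nrk A + 1 ≤ (B₁ ∩ A).ncard := h₁.2.2
      by_cases hxA : x ∈ A
      · by_cases hbig : M.nrk A + 2 ≤ (B₁ ∩ A).ncard
        · -- cusp target for any y
          obtain ⟨y, hy⟩ := hne
          refine ⟨y, hy, Or.inr ⟨hB'sub y (hE2 hy.1), hB'card y hy.2, ?_⟩⟩
          have hsup : (B₁ ∩ A) \ {x} ⊆ (insert y (B₁ \ {x})) ∩ A := by
            intro e he
            exact ⟨Or.inr ⟨he.1.1, he.2⟩, he.1.2⟩
          have hmono := Set.ncard_le_ncard hsup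
            ((hfin.subset (hB'sub y (hE2 hy.1))).subset inter_subset_left)
          rw [Set.ncard_diff_singleton_of_mem (Set.mem_inter hx.1 hxA)] at hmono
          omega
        · have heq : (B₁ ∩ A).ncard = M.nrk A + 1 := by omega
          by_cases hyex : ((B₂ ∩ A) \ B₁).Nonempty
          · -- cusp target
            obtain ⟨y, hyBA, hyB1⟩ := hyex
            refine ⟨y, ⟨hyBA.1, hyB1⟩, Or.inr
              ⟨hB'sub y (hE2 hyBA.1), hB'card y hyB1, ?_⟩⟩
            rw [hins_mem y hyBA.2,
              Set.ncard_insert_of_notMem (fun h => hyB1 h.1.1) hiAfin.diff,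
              Set.ncard_diff_singleton_of_mem (Set.mem_inter hx.1 hxA)]
            omega
          · -- B₂ ∩ A ⊆ B₁
            have hsubA : B₂ ∩ A ⊆ B₁ := by
              rw [not_nonempty_iff_eq_empty, diff_eq_empty] at hyex
              exact hyex
            rcases h₂ with h₂ | h₂
            · -- B₂ base : find y ∈ B₂ outside A ∪ B₁, base target
              have hyex2 : (B₂ \ (A ∪ B₁)).Nonempty := by
                rw [nonempty_iff_ne_empty]
                intro h0
                have hsub : B₂ ⊆ B₁ := by
                  intro e he
                  rcases diff_eq_empty.mp h0 he with h | h
                  · exact hsubA ⟨he, h⟩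
                  · exact h
                have heqB : B₂ = B₁ :=
                  Set.eq_of_subset_of_ncard_le hsub (by omega) hB1fin
                exact hx.2 (by rw [heqB]; exact hx.1)
              obtain ⟨y, hyB2, hyAB1⟩ := hyex2
              have hyB1 : y ∉ B₁ := fun h => hyAB1 (Or.inr h)
              have hyA : y ∉ A := fun h => hyAB1 (Or.inl h)
              refine ⟨y, ⟨hyB2, hyB1⟩, Or.inl ?_⟩
              apply key _ (hB'sub y (hE2 hyB2)) (hB'card y hyB1)
              rw [hins_not y hyA,
                Set.ncard_diff_singleton_of_mem (Set.mem_inter hx.1 hxA), heq]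
              omega
            · -- B₂ in cusp : contradiction
              exfalso
              have hsub : B₂ ∩ A ⊆ B₁ ∩ A := fun e he => ⟨hsubA he, he.2⟩
              have h2A : M.nrk A + 1 ≤ (B₂ ∩ A).ncard := h₂.2.2
              have heqset : B₂ ∩ A = B₁ ∩ A :=
                Set.eq_of_subset_of_ncard_le hsub (by omega) hiAfin
              have : x ∈ B₂ ∩ A := by rw [heqset]; exact (Set.mem_inter hx.1 hxA)
              exact hx.2 this.1
      · -- x ∉ A : cusp target for any y
        obtain ⟨y, hy⟩ := hne
        refine ⟨y, hy, Or.inr ⟨hB'sub y (hE2 hy.1), hB'card y hy.2, ?_⟩⟩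
        have hsup : B₁ ∩ A ⊆ (insert y (B₁ \ {x})) ∩ A := by
          intro e he
          exact ⟨Or.inr ⟨he.1, fun h => hxA (h ▸ he.2)⟩, he.2⟩
        have hmono := Set.ncard_le_ncard hsup
          ((hfin.subset (hB'sub y (hE2 hy.1))).subset inter_subset_left)
        omega
  refine ⟨Matroid.ofIsBaseOfFinite hfin Bs
    (let ⟨B, hB⟩ := M.exists_isBase; ⟨B, Or.inl hB⟩) hexch hground, rfl, fun B => ?_⟩
  rw [Matroid.ofIsBaseOfFinite_isBase]
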